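/- Let C ⊂ [-A,A] be a finite codebook with gap Δ_C, e_C(y) = min over c in C of (y-c)^2, and let Y be a real random variable and η(X) another real random variable, both supported in [-A,A]. Then |E[e_C(η(X))] - E[e_C(Y)]| ≤ 2Δ_C^2 · E[min{1, (1/Δ_C)·E[|η(X) - Y| | Y]}]. -/

import Mathlib

open MeasureTheory

lemma stmt6_auxB {Ω : Type*} [mΩ : MeasurableSpace Ω] (μ : Measure Ω) [IsProbabilityMeasure μ]
    {m : MeasurableSpace Ω} (hm : m ≤ mΩ) (Z : Ω → ℝ) (Δ : ℝ) (hΔpos : 0 < Δ)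
    (hZmeas : Measurable[mΩ] Z) (hZint : Integrable Z μ) (hZ0 : ∀ ω, 0 ≤ Z ω) :
    ∫ ω, min 1 (1 / Δ * Z ω) ∂μ ≤ ∫ ω, min 1 (1 / Δ * (μ[Z|m]) ω) ∂μ := by
  set g : Ω → ℝ := fun ω => min 1 (1 / Δ * Z ω) with hgdef
  have hg01 : ∀ ω, 0 ≤ g ω ∧ g ω ≤ 1 := by
    intro ω
    refine ⟨le_min zero_le_one ?_, min_le_left _ _⟩
    have := hZ0 ω
    positivity
  have hgmeas : Measurable[mΩ] g := measurable_const.min (hZmeas.const_mul _)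
  have hgint : Integrable g μ := by
    refine Integrable.mono' (integrable_const 1) hgmeas.aestronglyMeasurable
      (Filter.Eventually.of_forall fun ω => ?_)
    rw [Real.norm_eq_abs, abs_of_nonneg (hg01 ω).1]
    exact (hg01 ω).2
  have hintegral_g : ∫ ω, g ω ∂μ = ∫ ω, (μ[g|m]) ω ∂μ :=
    (integral_condExp hm).symm
  have hcond_le : (μ[g|m]) ≤ᵐ[μ] fun ω => min 1 (1 / Δ * (μ[Z|m]) ω) := by
    have h1 : (μ[g|m]) ≤ᵐ[μ] fun _ => (1 : ℝ) := by
      have h := condExp_mono (m := m) (μ := μ) hgint (integrable_const (1 : ℝ))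
        (Filter.Eventually.of_forall fun ω => (hg01 ω).2)
      calc (μ[g|m]) ≤ᵐ[μ] μ[(fun _ => (1 : ℝ))|m] := h
        _ =ᵐ[μ] fun _ => (1 : ℝ) := by rw [condExp_const hm]
    have h2 : (μ[g|m]) ≤ᵐ[μ] fun ω => 1 / Δ * (μ[Z|m]) ω := by
      have hmono2 := condExp_mono (m := m) (μ := μ) hgint (hZint.const_mul (1 / Δ))
        (Filter.Eventually.of_forall fun ω => min_le_right _ _)
      have hsmul : μ[(fun ω => 1 / Δ * Z ω)|m] =ᵐ[μ] fun ω => 1 / Δ * (μ[Z|m]) ω := by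
        have h := condExp_smul (m := m) (μ := μ) (1 / Δ : ℝ) Z
        simpa [Pi.smul_def, smul_eq_mul] using h
      exact hmono2.trans hsmul.le
    filter_upwards [h1, h2] with ω hω1 hω2
    exact le_min hω1 hω2
  have hRHSint : Integrable (fun ω => min 1 (1 / Δ * (μ[Z|m]) ω)) μ := by
    have h1 : Integrable (fun _ : Ω => (1 : ℝ)) μ := integrable_const 1
    have h2 : Integrable (fun ω => 1 / Δ * (μ[Z|m]) ω) μ :=
      integrable_condExp.const_mul _
    have h3 := h1.inf h2
    simpa [Pi.inf_def] using h3
  rw [hintegral_g]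
  exact integral_mono_ae integrable_condExp hRHSint hcond_le

/-- Comparison of the expected quantization errors of `η(X)` and `Y`:
`|E[e_C(η(X))] - E[e_C(Y)]| ≤ 2Δ_C² E[min{1, (1/Δ_C) E[|η(X) - Y| | Y]}]`,
where `e_C` is the squared distance to the codebook and `Δ_C` the maximal gap. -/
theorem stmt6 {Ω : Type*} [MeasurableSpace Ω] (μ : Measure Ω) [IsProbabilityMeasure μ]
    {k : ℕ} (hk : 0 < k) (A : ℝ) (hA : 0 < A)
    (y : Fin (k + 2) → ℝ) (h0 : y 0 = -A) (hlast : y (Fin.last (k + 1)) = A)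
    (hmono : Monotone y)
    (Δ : ℝ) (hΔ : Δ = ⨆ j : Fin (k + 1), (y j.succ - y j.castSucc))
    (e : ℝ → ℝ) (he : ∀ t, e t = ⨅ j : Fin k, (t - y j.succ.castSucc) ^ 2)
    (Y ηX : Ω → ℝ) (hY : Measurable Y) (hηX : Measurable ηX)
    (hYsupp : ∀ᵐ ω ∂μ, Y ω ∈ Set.Icc (-A) A)
    (hηsupp : ∀ᵐ ω ∂μ, ηX ω ∈ Set.Icc (-A) A) :
    |(∫ ω, e (ηX ω) ∂μ) - ∫ ω, e (Y ω) ∂μ|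
      ≤ 2 * Δ ^ 2 * ∫ ω, min 1
          ((1 / Δ) * (μ[fun ω' => |ηX ω' - Y ω'| |
              MeasurableSpace.comap Y inferInstance]) ω) ∂μ := by
  have hk1 : Nonempty (Fin k) := ⟨⟨0, hk⟩⟩
  -- gaps
  set gap : Fin (k + 1) → ℝ := fun j => y j.succ - y j.castSucc with hgapdef
  have hgap_le : ∀ j, gap j ≤ Δ := by
    intro j
    rw [hΔ]
    exact le_ciSup (Set.Finite.bddAbove (Set.finite_range _)) j
  -- Δ > 0
  have hΔpos : 0 < Δ := by
    open Fin.NatCast in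
    have hsum : ∑ j : Fin (k + 1), gap j = 2 * A := by
      have hstep : ∑ j : Fin (k + 1), gap j
          = ∑ i ∈ Finset.range (k + 1), ((fun n : ℕ => y n) (i + 1) - (fun n : ℕ => y n) i) := by
        rw [← Fin.sum_univ_eq_sum_range]
        apply Finset.sum_congr rfl
        intro j _
        have e1 : ((j.val + 1 : ℕ) : Fin (k + 2)) = j.succ := by
          ext
          rw [Fin.val_cast_of_lt (by omega)]
          simp
        have e2 : ((j.val : ℕ) : Fin (k + 2)) = j.castSucc := by
          ext
          rw [Fin.val_cast_of_lt (by omega)]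
          simp
        simp only [hgapdef, Nat.cast_add, Nat.cast_one]
        rw [← e1, ← e2]
        push_cast
        ring_nf
      rw [hstep, Finset.sum_range_sub (fun n : ℕ => y n)]
      have h1 : ((k + 1 : ℕ) : Fin (k + 2)) = Fin.last (k + 1) := by
        ext
        rw [Fin.val_cast_of_lt (by omega)]
        simp
      have h2 : ((0 : ℕ) : Fin (k + 2)) = 0 := by simp
      rw [h1, h2, hlast, h0]
      ring
    have hle : ∑ j : Fin (k + 1), gap j ≤ ∑ _j : Fin (k + 1), Δ :=
      Finset.sum_le_sum fun j _ => hgap_le j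
    rw [hsum, Finset.sum_const, Finset.card_univ, Fintype.card_fin] at hle
    simp only [nsmul_eq_mul] at hle
    nlinarith [hle]
  -- codepoints and distance function
  set c : Fin k → ℝ := fun j => y j.succ.castSucc with hcdef
  set dd : ℝ → ℝ := fun t => ⨅ j : Fin k, |t - c j| with hdddef
  have hbdd : ∀ t : ℝ, BddBelow (Set.range fun j : Fin k => |t - c j|) :=
    fun t => Set.Finite.bddBelow (Set.finite_range _)
  have hdd_le : ∀ (j : Fin k) (t : ℝ), dd t ≤ |t - c j| :=
    fun j t => ciInf_le (hbdd t) j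
  have hdd_nonneg : ∀ t, 0 ≤ dd t := fun t => le_ciInf fun j => abs_nonneg _
  have hdd_exists : ∀ t : ℝ, ∃ j, dd t = |t - c j| := by
    intro t
    obtain ⟨j, hj⟩ := exists_eq_ciInf_of_finite (f := fun j : Fin k => |t - c j|)
    exact ⟨j, hj.symm⟩
  have h_e_dd : ∀ t, e t = dd t ^ 2 := by
    intro t
    obtain ⟨j₀, hj₀⟩ := hdd_exists t
    rw [he]
    apply le_antisymm
    · calc ⨅ j : Fin k, (t - y j.succ.castSucc) ^ 2
          ≤ (t - y j₀.succ.castSucc) ^ 2 :=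
            ciInf_le (Set.Finite.bddBelow (Set.finite_range _)) j₀
        _ = dd t ^ 2 := by rw [hj₀, ← sq_abs]
    · apply le_ciInf
      intro j
      rw [hj₀, ← sq_abs (t - y j.succ.castSucc)]
      exact pow_le_pow_left₀ (abs_nonneg _) (hj₀ ▸ hdd_le j t) 2
  have hdd_lip : ∀ t s : ℝ, dd t ≤ dd s + |t - s| := by
    intro t s
    obtain ⟨j₀, hj₀⟩ := hdd_exists s
    calc dd t ≤ |t - c j₀| := hdd_le j₀ t
      _ ≤ |t - s| + |s - c j₀| := abs_sub_le t s (c j₀)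
      _ = dd s + |t - s| := by rw [hj₀]; ring
  -- dd ≤ Δ on [-A, A]
  have hdd_le_Δ : ∀ t ∈ Set.Icc (-A) A, dd t ≤ Δ := by
    intro t ht
    have hex : ∃ i : Fin (k + 1), y i.castSucc ≤ t ∧ t ≤ y i.succ := by
      classical
      set S : Finset (Fin (k + 2)) := Finset.univ.filter fun i => y i ≤ t with hS
      have h0S : (0 : Fin (k + 2)) ∈ S := by
        simp [hS, h0, ht.1]
      have hSne : S.Nonempty := ⟨0, h0S⟩
      set mS := S.max' hSne with hmS
      have hmSmem : mS ∈ S := S.max'_mem hSne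
      have hymS : y mS ≤ t := (Finset.mem_filter.1 hmSmem).2
      by_cases hL : mS = Fin.last (k + 1)
      · have htA : t = A := le_antisymm ht.2 (by rw [← hlast, ← hL]; exact hymS)
        refine ⟨Fin.last k, ?_, ?_⟩
        · have h := hmono (Fin.le_last (Fin.last k).castSucc)
          rw [hlast] at h
          linarith
        · have hsucc : (Fin.last k).succ = Fin.last (k + 1) := by ext; simp
          rw [hsucc, hlast, htA]
      · refine ⟨mS.castPred hL, ?_, ?_⟩
        · rwa [Fin.castSucc_castPred]
        · by_contra h
          push_neg at h
          have hmem : (mS.castPred hL).succ ∈ S := by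
            simp only [hS, Finset.mem_filter, Finset.mem_univ, true_and]
            exact le_of_lt h
          have hle := S.le_max' _ hmem
          rw [← hmS] at hle
          have hv : ((mS.castPred hL).succ : Fin (k + 2)).val = mS.val + 1 := by
            simp
          have hvle := Fin.le_iff_val_le_val.mp hle
          omega
    obtain ⟨i, h1, h2⟩ := hex
    by_cases hi0 : i.val = 0
    · have hc1 : c ⟨0, hk⟩ = y i.succ := by
        simp only [hcdef]
        congr 2
        ext
        simp
        exact Fin.ext hi0
      calc dd t ≤ |t - c ⟨0, hk⟩| := hdd_le _ t
        _ = y i.succ - t := by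
            rw [hc1, abs_sub_comm, abs_of_nonneg (by linarith)]
        _ ≤ gap i := by simp only [hgapdef]; linarith
        _ ≤ Δ := hgap_le i
    · have hik : i.val ≤ k := Nat.lt_succ_iff.mp i.isLt
      have hc1 : c ⟨i.val - 1, by omega⟩ = y i.castSucc := by
        simp only [hcdef]
        congr 2
        ext
        simp
        omega
      calc dd t ≤ |t - c ⟨i.val - 1, by omega⟩| := hdd_le _ t
        _ = t - y i.castSucc := by rw [hc1, abs_of_nonneg (by linarith)]
        _ ≤ gap i := by simp only [hgapdef]; linarith
        _ ≤ Δ := hgap_le i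
  -- Lipschitz-type bound for e
  have hlip : ∀ t ∈ Set.Icc (-A) A, ∀ s ∈ Set.Icc (-A) A,
      |e t - e s| ≤ 2 * Δ ^ 2 * min 1 (1 / Δ * |t - s|) := by
    intro t ht s hs
    have ha := hdd_nonneg t
    have hb := hdd_nonneg s
    have haΔ := hdd_le_Δ t ht
    have hbΔ := hdd_le_Δ s hs
    have hab : |dd t - dd s| ≤ min Δ |t - s| := by
      apply le_min
      · rw [abs_le]; constructor <;> nlinarith
      · rw [abs_le]
        constructor
        · have h := hdd_lip s t
          rw [abs_sub_comm] at h
          linarith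
        · have h := hdd_lip t s
          linarith
    have hfac : e t - e s = (dd t + dd s) * (dd t - dd s) := by
      rw [h_e_dd, h_e_dd]; ring
    have hmin : 2 * Δ * min Δ |t - s| = 2 * Δ ^ 2 * min 1 (1 / Δ * |t - s|) := by
      rw [show (2 : ℝ) * Δ ^ 2 * min 1 (1 / Δ * |t - s|)
          = (2 * Δ) * (Δ * min 1 (1 / Δ * |t - s|)) by ring,
        mul_min_of_nonneg _ _ (le_of_lt hΔpos)]
      congr 2
      · ring
      · field_simp
    rw [hfac, ← hmin, abs_mul]
    apply mul_le_mul
    · rw [abs_of_nonneg (by linarith)]; linarith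
    · exact hab
    · exact abs_nonneg _
    · linarith
  -- continuity / measurability of e
  have hdd_cont : Continuous dd := by
    apply LipschitzWith.continuous (K := 1)
    apply LipschitzWith.of_dist_le_mul
    intro t s
    rw [Real.dist_eq, Real.dist_eq]
    have h1 := hdd_lip s t
    have h2 := hdd_lip t s
    rw [abs_sub_comm s t] at h1
    simp only [NNReal.coe_one, one_mul]
    rw [abs_le]
    constructor <;> linarith
  have he_cont : Continuous e := by
    have hh : e = fun t => dd t ^ 2 := funext h_e_dd
    rw [hh]
    exact hdd_cont.pow 2
  have he_meas : Measurable e := he_cont.measurable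
  -- integrability
  have he_bound : ∀ t ∈ Set.Icc (-A) A, ‖e t‖ ≤ Δ ^ 2 := by
    intro t ht
    rw [h_e_dd, Real.norm_eq_abs, abs_of_nonneg (sq_nonneg _)]
    exact pow_le_pow_left₀ (hdd_nonneg t) (hdd_le_Δ t ht) 2
  have hint1 : Integrable (fun ω => e (ηX ω)) μ := by
    refine Integrable.mono' (integrable_const (Δ ^ 2))
      ((he_meas.comp hηX).aestronglyMeasurable) ?_
    filter_upwards [hηsupp] with ω hω using he_bound _ hω
  have hint2 : Integrable (fun ω => e (Y ω)) μ := by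
    refine Integrable.mono' (integrable_const (Δ ^ 2))
      ((he_meas.comp hY).aestronglyMeasurable) ?_
    filter_upwards [hYsupp] with ω hω using he_bound _ hω
  have hZmeas : Measurable (fun ω' => |ηX ω' - Y ω'|) := (hηX.sub hY).abs
  have hZint : Integrable (fun ω' => |ηX ω' - Y ω'|) μ := by
    refine Integrable.mono' (integrable_const (2 * A))
      hZmeas.aestronglyMeasurable ?_
    filter_upwards [hYsupp, hηsupp] with ω hy hη
    rw [Real.norm_eq_abs, abs_abs, abs_le]
    obtain ⟨hy1, hy2⟩ := hy
    obtain ⟨hη1, hη2⟩ := hη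
    constructor <;> linarith
  have hgmeas : Measurable (fun ω => min 1 (1 / Δ * |ηX ω - Y ω|)) :=
    measurable_const.min (hZmeas.const_mul _)
  have hgint : Integrable (fun ω => min 1 (1 / Δ * |ηX ω - Y ω|)) μ := by
    refine Integrable.mono' (integrable_const 1) hgmeas.aestronglyMeasurable
      (Filter.Eventually.of_forall fun ω => ?_)
    have h0' : (0 : ℝ) ≤ min 1 (1 / Δ * |ηX ω - Y ω|) := by
      apply le_min zero_le_one
      positivity
    rw [Real.norm_eq_abs, abs_of_nonneg h0']
    exact min_le_left _ _
  -- Step A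
  have hstepA : |(∫ ω, e (ηX ω) ∂μ) - ∫ ω, e (Y ω) ∂μ|
      ≤ 2 * Δ ^ 2 * ∫ ω, min 1 (1 / Δ * |ηX ω - Y ω|) ∂μ := by
    rw [← integral_sub hint1 hint2]
    calc |∫ ω, (e (ηX ω) - e (Y ω)) ∂μ|
        ≤ ∫ ω, |e (ηX ω) - e (Y ω)| ∂μ := by
          simpa [Real.norm_eq_abs] using
            norm_integral_le_integral_norm (μ := μ) (fun ω => e (ηX ω) - e (Y ω))
      _ ≤ ∫ ω, 2 * Δ ^ 2 * min 1 (1 / Δ * |ηX ω - Y ω|) ∂μ := by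
          apply integral_mono_ae ((hint1.sub hint2).abs) (hgint.const_mul _)
          filter_upwards [hηsupp, hYsupp] with ω hω1 hω2
          exact hlip _ hω1 _ hω2
      _ = 2 * Δ ^ 2 * ∫ ω, min 1 (1 / Δ * |ηX ω - Y ω|) ∂μ := integral_const_mul _ _
  -- Step B
  have hstepB := stmt6_auxB μ hY.comap_le (fun ω' => |ηX ω' - Y ω'|) Δ hΔpos
    hZmeas hZint (fun ω => abs_nonneg _)
  calc |(∫ ω, e (ηX ω) ∂μ) - ∫ ω, e (Y ω) ∂μ|
      ≤ 2 * Δ ^ 2 * ∫ ω, min 1 (1 / Δ * |ηX ω - Y ω|) ∂μ := hstepA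
    _ ≤ 2 * Δ ^ 2 * ∫ ω, min 1
          ((1 / Δ) * (μ[fun ω' => |ηX ω' - Y ω'| |
              MeasurableSpace.comap Y inferInstance]) ω) ∂μ := by
        apply mul_le_mul_of_nonneg_left hstepB
        positivity
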